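/- Let T > 0, 𝒜 > 0 and γ > 1. Let Ψ : [0,T) → (0,∞) be differentiable with Ψ'(t) ≤ 𝒜 Ψ(t)^{γ} for all t ∈ [0,T), and suppose limsup_{t → T⁻} Ψ(t) = ∞. Then T ≥ 1/(𝒜 (γ−1) Ψ(0)^{γ−1}). -/

import Mathlib

open Filter

theorem safe_existence_time_estimate
    (T A γ : ℝ) (hT : 0 < T) (hA : 0 < A) (hγ : 1 < γ)
    (Ψ Ψ' : ℝ → ℝ)
    (hpos : ∀ t ∈ Set.Ico (0:ℝ) T, 0 < Ψ t)
    (hderiv : ∀ t ∈ Set.Ico (0:ℝ) T, HasDerivWithinAt Ψ (Ψ' t) (Set.Ico 0 T) t)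
    (hineq : ∀ t ∈ Set.Ico (0:ℝ) T, Ψ' t ≤ A * Ψ t ^ γ)
    (hblow : ∀ M : ℝ, ∃ᶠ t in nhdsWithin T (Set.Iio T), M < Ψ t) :
    T ≥ 1 / (A * (γ - 1) * Ψ 0 ^ (γ - 1)) := by
  have hβ : 0 < γ - 1 := by linarith
  have hΨ0 : 0 < Ψ 0 := hpos 0 ⟨le_refl 0, hT⟩
  set g : ℝ → ℝ := fun t => Ψ t ^ (1 - γ) + (γ - 1) * A * t with hgdef
  set g' : ℝ → ℝ := fun t => (1 - γ) * Ψ t ^ (1 - γ - 1) * Ψ' t + (γ - 1) * A with hg'def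
  have hgd : ∀ t ∈ Set.Ico (0:ℝ) T, HasDerivWithinAt g (g' t) (Set.Ico 0 T) t := by
    intro t ht
    have h1 : HasDerivWithinAt (fun s => Ψ s ^ (1 - γ))
        (Ψ' t * (1 - γ) * Ψ t ^ (1 - γ - 1)) (Set.Ico 0 T) t :=
      (hderiv t ht).rpow_const (Or.inl (hpos t ht).ne')
    have h2 : HasDerivWithinAt (fun s => (γ - 1) * A * s) ((γ - 1) * A) (Set.Ico 0 T) t := by
      simpa using (hasDerivWithinAt_id t (Set.Ico 0 T)).const_mul ((γ - 1) * A)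
    have h3 := h1.add h2
    refine h3.congr_deriv ?_
    show _ = (1 - γ) * Ψ t ^ (1 - γ - 1) * Ψ' t + (γ - 1) * A
    ring
  have hg'nonneg : ∀ t ∈ Set.Ico (0:ℝ) T, 0 ≤ g' t := by
    intro t ht
    have hΨt := hpos t ht
    have hpow : Ψ t ^ (1 - γ - 1) * Ψ t ^ γ = 1 := by
      rw [← Real.rpow_add hΨt]
      norm_num
    have hpowpos : 0 < Ψ t ^ (1 - γ - 1) := Real.rpow_pos_of_pos hΨt _
    have h1 : Ψ t ^ (1 - γ - 1) * Ψ' t ≤ Ψ t ^ (1 - γ - 1) * (A * Ψ t ^ γ) :=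
      mul_le_mul_of_nonneg_left (hineq t ht) hpowpos.le
    have h2 : Ψ t ^ (1 - γ - 1) * (A * Ψ t ^ γ) = A := by
      rw [mul_comm A, ← mul_assoc, hpow, one_mul]
    have hneg : (1 - γ) ≤ 0 := by linarith
    simp only [hg'def]
    nlinarith [h1, h2]
  have hmono : MonotoneOn g (Set.Ico 0 T) := by
    have hint : interior (Set.Ico (0:ℝ) T) = Set.Ioo 0 T := interior_Ico
    apply monotoneOn_of_hasDerivWithinAt_nonneg (f' := g') (convex_Ico 0 T)
    · exact fun t ht => (hgd t ht).continuousWithinAt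
    · intro t ht
      rw [hint] at ht ⊢
      exact (hgd t ⟨ht.1.le, ht.2⟩).mono Set.Ioo_subset_Ico_self
    · intro t ht
      rw [hint] at ht
      exact hg'nonneg t ⟨ht.1.le, ht.2⟩
  have hkey : Ψ 0 ^ (1 - γ) ≤ (γ - 1) * A * T := by
    refine le_of_forall_pos_lt_add fun ε hε => ?_
    set M : ℝ := (ε⁻¹) ^ ((γ - 1)⁻¹) with hM
    have hMpos : 0 < M := Real.rpow_pos_of_pos (inv_pos.2 hε) _
    have hMpow : M ^ (γ - 1) = ε⁻¹ := by
      rw [hM, ← Real.rpow_mul (inv_pos.2 hε).le,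
        inv_mul_cancel₀ (ne_of_gt hβ), Real.rpow_one]
    have hev : ∀ᶠ t in nhdsWithin T (Set.Iio T), (0:ℝ) < t ∧ t ∈ Set.Iio T := by
      refine Eventually.and ?_ (eventually_mem_nhdsWithin)
      exact (eventually_gt_nhds hT).filter_mono nhdsWithin_le_nhds
    obtain ⟨t, htM, htpos, htlt'⟩ := ((hblow M).and_eventually hev).exists
    have htlt : t < T := htlt'
    have htmem : t ∈ Set.Ico (0:ℝ) T := ⟨htpos.le, htlt⟩
    have hΨt : 0 < Ψ t := hpos t htmem
    have hsmall : Ψ t ^ (1 - γ) < ε := by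
      have h1 : M ^ (γ - 1) < Ψ t ^ (γ - 1) := Real.rpow_lt_rpow hMpos.le htM hβ
      rw [hMpow] at h1
      have h2 : Ψ t ^ (1 - γ) = (Ψ t ^ (γ - 1))⁻¹ := by
        rw [← Real.rpow_neg hΨt.le]; norm_num
      rw [h2]
      calc (Ψ t ^ (γ - 1))⁻¹ < (ε⁻¹)⁻¹ := by
            exact inv_strictAnti₀ (inv_pos.2 hε) h1
        _ = ε := inv_inv ε
    have hg0 : g 0 ≤ g t := hmono ⟨le_refl 0, hT⟩ htmem htpos.le
    simp only [hgdef] at hg0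
    have hAt : (γ - 1) * A * t ≤ (γ - 1) * A * T := by
      have : 0 < (γ - 1) * A := by positivity
      nlinarith [htlt.le]
    calc Ψ 0 ^ (1 - γ) ≤ Ψ t ^ (1 - γ) + (γ - 1) * A * t := by
          simpa using hg0
      _ < ε + (γ - 1) * A * T := by linarith
      _ = (γ - 1) * A * T + ε := by ring
  have hP : 0 < Ψ 0 ^ (γ - 1) := Real.rpow_pos_of_pos hΨ0 _
  have hinv : Ψ 0 ^ (1 - γ) = (Ψ 0 ^ (γ - 1))⁻¹ := by
    rw [← Real.rpow_neg hΨ0.le]; norm_num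
  rw [hinv] at hkey
  rw [ge_iff_le, div_le_iff₀ (by positivity)]
  have := mul_le_mul_of_nonneg_right hkey hP.le
  rw [inv_mul_cancel₀ (ne_of_gt hP)] at this
  nlinarith [this]
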